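/- Let C ⊆ ℝⁿ be a nonempty closed convex set that is hyperbolic. Then dom σ_C = (rec C)°, the polar cone of the recession cone of C. -/
import Mathlib


open scoped InnerProductSpace Pointwise ENNReal
open Metric Filter

/-- The support function `σ_C(d) = sup_{x ∈ C} ⟪d, x⟫` of a set `C ⊆ ℝⁿ`,
with values in the extended reals. -/
noncomputable def suppFun {n : ℕ} (C : Set (EuclideanSpace ℝ (Fin n)))
    (d : EuclideanSpace ℝ (Fin n)) : EReal :=
  ⨆ x ∈ C, ((⟪d, x⟫_ℝ : ℝ) : EReal)

/-- The effective domain `dom σ_C = {d : σ_C(d) < +∞}` of the support function. -/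
def suppDom {n : ℕ} (C : Set (EuclideanSpace ℝ (Fin n))) :
    Set (EuclideanSpace ℝ (Fin n)) :=
  {d | suppFun C d < ⊤}

/-- The recession cone `rec C` of a set `C`. -/
def recCone {n : ℕ} (C : Set (EuclideanSpace ℝ (Fin n))) :
    Set (EuclideanSpace ℝ (Fin n)) :=
  {y | ∀ x ∈ C, ∀ t : ℝ, 0 ≤ t → x + t • y ∈ C}

/-- The truncation `C_r = (C ∩ rB) + rec C` of `C` of radius `r`. -/
def trunc {n : ℕ} (C : Set (EuclideanSpace ℝ (Fin n))) (r : ℝ) :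
    Set (EuclideanSpace ℝ (Fin n)) :=
  (C ∩ closedBall 0 r) + recCone C

/-- `C` is approximately M-decomposable: for every `ε > 0` there is `r > 0`
with `C ⊆ C_r + εB`. -/
def ApproxMDecomposable {n : ℕ} (C : Set (EuclideanSpace ℝ (Fin n))) : Prop :=
  ∀ ε > (0 : ℝ), ∃ r > (0 : ℝ), C ⊆ trunc C r + closedBall 0 ε

/-- `C` is M-decomposable: `C = M + rec C` for some compact convex `M`. -/
def MDecomposable {n : ℕ} (C : Set (EuclideanSpace ℝ (Fin n))) : Prop :=
  ∃ M : Set (EuclideanSpace ℝ (Fin n)), IsCompact M ∧ Convex ℝ M ∧ C = M + recCone C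

/-- `C` is hyperbolic: `C ⊆ M + rec C` for some compact convex `M`. -/
def Hyperbolic {n : ℕ} (C : Set (EuclideanSpace ℝ (Fin n))) : Prop :=
  ∃ M : Set (EuclideanSpace ℝ (Fin n)), IsCompact M ∧ Convex ℝ M ∧ C ⊆ M + recCone C

/-- The polar cone `K° = {d : ⟪d, x⟫ ≤ 0 for all x ∈ K}` of a cone `K`. -/
def polarCone {n : ℕ} (K : Set (EuclideanSpace ℝ (Fin n))) :
    Set (EuclideanSpace ℝ (Fin n)) :=
  {d | ∀ x ∈ K, ⟪d, x⟫_ℝ ≤ 0}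

/-- if `C` is hyperbolic, then `dom σ_C = (rec C)°`. -/
theorem hyperbolic_suppDom_eq_polar_recCone {n : ℕ}
    (C : Set (EuclideanSpace ℝ (Fin n)))
    (hne : C.Nonempty) (hcl : IsClosed C) (hconv : Convex ℝ C)
    (h : Hyperbolic C) :
    suppDom C = polarCone (recCone C) := by
  ext d
  simp only [suppDom, polarCone, Set.mem_setOf_eq]
  constructor
  · intro hd y hy
    by_contra hpos
    push_neg at hpos
    obtain ⟨x₀, hx₀⟩ := hne
    have hbdd : ∀ t : ℝ, 0 ≤ t → (⟪d, x₀ + t • y⟫_ℝ : EReal) ≤ suppFun C d := by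
      intro t ht
      exact le_iSup₂_of_le (x₀ + t • y) (hy x₀ hx₀ t ht) le_rfl
    have h0 := hbdd 0 le_rfl
    have hnb : suppFun C d ≠ ⊥ := by
      intro hb
      rw [hb, le_bot_iff] at h0
      exact EReal.coe_ne_bot _ h0
    set B := (suppFun C d).toReal with hB
    have hcoe : ((B : ℝ) : EReal) = suppFun C d := EReal.coe_toReal hd.ne hnb
    have hbR : ∀ t : ℝ, 0 ≤ t → ⟪d, x₀⟫_ℝ + t * ⟪d, y⟫_ℝ ≤ B := by
      intro t ht
      have := hbdd t ht
      rw [← hcoe] at this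
      have := EReal.coe_le_coe_iff.mp this
      rwa [inner_add_right, real_inner_smul_right] at this
    have h0R : ⟪d, x₀⟫_ℝ ≤ B := by
      have := hbR 0 le_rfl; linarith
    set t := (B - ⟪d, x₀⟫_ℝ + 1) / ⟪d, y⟫_ℝ with ht
    have htpos : 0 ≤ t := by
      apply div_nonneg _ hpos.le
      linarith
    have := hbR t htpos
    rw [ht, div_mul_cancel₀ _ (ne_of_gt hpos)] at this
    linarith
  · intro hd
    obtain ⟨M, hMc, hMconv, hsub⟩ := h
    obtain ⟨R, hR⟩ := hMc.isBounded.subset_closedBall 0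
    have hle : suppFun C d ≤ ((‖d‖ * R : ℝ) : EReal) := by
      apply iSup₂_le
      intro x hx
      obtain ⟨m, hm, z, hz, rfl⟩ := hsub hx
      rw [EReal.coe_le_coe_iff, inner_add_right]
      have h1 : ⟪d, m⟫_ℝ ≤ ‖d‖ * R := by
        refine le_trans (real_inner_le_norm d m) ?_
        have hmR : ‖m‖ ≤ R := by
          have := hR hm
          simpa [mem_closedBall, dist_zero_right] using this
        exact mul_le_mul_of_nonneg_left hmR (norm_nonneg d)
      have h2 : ⟪d, z⟫_ℝ ≤ 0 := hd z hz
      linarith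
    exact lt_of_le_of_lt hle (EReal.coe_lt_top _)
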